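/- Let G be a connected 3P1-free graph with no dominating vertex. Then G has a fall colouring if and only if the complement of G has a perfect matching; moreover, in this case every fall colouring of G has all colour classes of size exactly 2, so G has a fall colouring with exactly |V(G)|/2 colours and no other fall colourings. -/

import Mathlib

open SimpleGraph

/-- A proper colouring of `G` given as a function to `ℕ`. -/
def IsProperColoring {V : Type*} (G : SimpleGraph V) (c : V → ℕ) : Prop :=
  ∀ u v, G.Adj u v → c u ≠ c v

/-- A vertex `v` is b-chromatic under `c`: it has a neighbour of every used colour
other than its own. -/
def IsBVertex {V : Type*} (G : SimpleGraph V) (c : V → ℕ) (v : V) : Prop :=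
  ∀ j ∈ Set.range c, j ≠ c v → ∃ u, G.Adj v u ∧ c u = j

/-- A b-colouring: a proper colouring in which every colour class contains a
b-chromatic vertex. -/
def IsBColoring {V : Type*} (G : SimpleGraph V) (c : V → ℕ) : Prop :=
  IsProperColoring G c ∧ ∀ j ∈ Set.range c, ∃ v, c v = j ∧ IsBVertex G c v

/-- The number of colours used by a colouring. -/
noncomputable def numColors {V : Type*} (c : V → ℕ) : ℕ := (Set.range c).ncard

/-- The b-chromatic number: the maximum number of colours in a b-colouring. -/
noncomputable def bChromaticNumber {V : Type*} (G : SimpleGraph V) : ℕ :=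
  sSup {k | ∃ c, IsBColoring G c ∧ numColors c = k}

/-- The m-degree `m(G)`: the largest `k` such that `G` has at least `k` vertices of
degree at least `k - 1`. -/
noncomputable def mDegree {V : Type*} (G : SimpleGraph V) : ℕ :=
  sSup {k | k ≤ {v : V | k ≤ (G.neighborSet v).ncard + 1}.ncard}

/-- The set of dense vertices: those of degree at least `m(G) - 1`. -/
def denseSet {V : Type*} (G : SimpleGraph V) : Set V :=
  {v | mDegree G ≤ (G.neighborSet v).ncard + 1}

/-- A graph is tight if it has exactly `m(G)` dense vertices, each of degree
exactly `m(G) - 1`. -/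
def IsTight {V : Type*} (G : SimpleGraph V) : Prop :=
  (denseSet G).ncard = mDegree G ∧
    ∀ v ∈ denseSet G, (G.neighborSet v).ncard = mDegree G - 1

/-- A fall colouring: a proper colouring in which every vertex has a neighbour of
every used colour other than its own. -/
def IsFallColoring {V : Type*} (G : SimpleGraph V) (c : V → ℕ) : Prop :=
  IsProperColoring G c ∧ ∀ v, ∀ j ∈ Set.range c, j ≠ c v → ∃ u, G.Adj v u ∧ c u = j

/-- The fall spectrum: the set of numbers of colours of fall colourings of `G`. -/
def fallSpectrum {V : Type*} (G : SimpleGraph V) : Set ℕ :=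
  {k | ∃ c, IsFallColoring G c ∧ numColors c = k}

/-- The outer boundary of a vertex set: vertices outside it with a neighbour in it. -/
def outerBoundary {V : Type*} (G : SimpleGraph V) (T : Set V) : Set V :=
  {s | s ∉ T ∧ ∃ t ∈ T, G.Adj s t}

lemma classPair {V : Type} [Fintype V] (G : SimpleGraph V)
    (h3p1 : ∀ u v w : V, u ≠ v → u ≠ w → v ≠ w →
      ¬ G.Adj u v → ¬ G.Adj u w → ¬ G.Adj v w → False)
    (hnodom : ¬ ∃ v : V, ∀ w, w ≠ v → G.Adj v w)
    (c : V → ℕ) (hc : IsFallColoring G c) (j : ℕ) (hj : j ∈ Set.range c) :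
    ∃ a b : V, a ≠ b ∧ ¬ G.Adj a b ∧ {v | c v = j} = {a, b} := by
  obtain ⟨a, ha⟩ := hj
  by_cases hb : ∃ b, b ≠ a ∧ c b = j
  · obtain ⟨b, hba, hbj⟩ := hb
    refine ⟨a, b, hba.symm, fun hadj => hc.1 a b hadj (ha.trans hbj.symm), ?_⟩
    ext x
    simp only [Set.mem_setOf_eq, Set.mem_insert_iff, Set.mem_singleton_iff]
    constructor
    · intro hx
      by_contra hxab
      push_neg at hxab
      exact h3p1 x a b hxab.1 hxab.2 hba.symm
        (fun h => hc.1 x a h (hx.trans ha.symm))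
        (fun h => hc.1 x b h (hx.trans hbj.symm))
        (fun h => hc.1 a b h (ha.trans hbj.symm))
    · rintro (rfl | rfl) <;> assumption
  · exfalso
    apply hnodom
    refine ⟨a, fun w hw => ?_⟩
    have hcw : c w ≠ j := fun h => hb ⟨w, hw, h⟩
    obtain ⟨u, hu, huj⟩ := hc.2 w j ⟨a, ha⟩ (Ne.symm hcw)
    have : u = a := by
      by_contra h; exact hb ⟨u, h, huj⟩
    subst this
    exact hu.symm

lemma countLem {V : Type} [Fintype V] (c : V → ℕ)
    (h2 : ∀ j ∈ Set.range c, {v | c v = j}.ncard = 2) :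
    Fintype.card V = 2 * (Set.range c).ncard := by
  classical
  have hrange : Set.range c = ↑(Finset.univ.image c) := by
    simp [Set.range, Finset.coe_image]
  have hfib : ∀ j ∈ Finset.univ.image c,
      (Finset.univ.filter (fun v => c v = j)).card = 2 := by
    intro j hj
    have hj' : j ∈ Set.range c := by
      rw [hrange]; exact_mod_cast hj
    have := h2 j hj'
    rwa [show {v | c v = j}.ncard = (Finset.univ.filter (fun v => c v = j)).card by
      rw [← Set.ncard_coe_finset]; congr 1; ext x; simp] at this
  have := Finset.card_eq_sum_card_fiberwise
    (f := c) (s := Finset.univ) (t := Finset.univ.image c)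
    (fun x _ => Finset.mem_image_of_mem c (Finset.mem_univ x))
  rw [Finset.card_univ] at this
  rw [this, Finset.sum_congr rfl hfib, Finset.sum_const, smul_eq_mul,
    hrange, Set.ncard_coe_finset, mul_comm]

lemma matchToFall {V : Type} [Fintype V] (G : SimpleGraph V)
    (h3p1 : ∀ u v w : V, u ≠ v → u ≠ w → v ≠ w →
      ¬ G.Adj u v → ¬ G.Adj u w → ¬ G.Adj v w → False)
    (M : (Gᶜ).Subgraph) (hM : M.IsPerfectMatching) :
    ∃ c : V → ℕ, IsFallColoring G c := by
  classical
  have hex : ∀ v : V, ∃! w, M.Adj v w := fun v => hM.1 (hM.2 v)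
  set f : V → V := fun v => (hex v).choose with hf
  have hadj : ∀ v, M.Adj v (f v) := fun v => (hex v).choose_spec.1
  have huniq : ∀ v w, M.Adj v w → w = f v := fun v w h => (hex v).choose_spec.2 w h
  have hcompl : ∀ v, (Gᶜ).Adj v (f v) := fun v => M.adj_sub (hadj v)
  have hne : ∀ v, v ≠ f v := fun v => (hcompl v).ne
  have hnadj : ∀ v, ¬ G.Adj v (f v) := fun v => ((compl_adj G v (f v)).mp (hcompl v)).2
  have finv : ∀ v, f (f v) = v := fun v => (huniq (f v) v (hadj v).symm).symm
  set e := Fintype.equivFin V with he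
  set enc : V → ℕ := fun v => (e v : ℕ) with henc
  have hinj : Function.Injective enc := fun a b h => e.injective (Fin.val_injective h)
  set c : V → ℕ := fun v => min (enc v) (enc (f v)) with hc
  have hcf : ∀ v, c (f v) = c v := by
    intro v; simp only [hc, finv]; exact min_comm _ _
  have pairkey : ∀ u v, c u = c v → v = u ∨ v = f u := by
    intro u v h
    rcases min_cases (enc u) (enc (f u)) with ⟨h1, -⟩ | ⟨h1, -⟩ <;>
    rcases min_cases (enc v) (enc (f v)) with ⟨h2, -⟩ | ⟨h2, -⟩ <;>
      rw [show c u = min (enc u) (enc (f u)) from rfl,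
        show c v = min (enc v) (enc (f v)) from rfl, h1, h2] at h
    · exact Or.inl (hinj h).symm
    · right; exact (by rw [hinj h, finv] : f u = v).symm
    · right; exact (hinj h).symm
    · left; have := hinj h; rw [← finv u, this, finv]
  refine ⟨c, ?_, ?_⟩
  · intro u v huv hcc
    rcases pairkey u v hcc with rfl | rfl
    · exact huv.ne rfl
    · exact hnadj u huv
  · rintro v j ⟨w, rfl⟩ hj
    by_cases h1 : G.Adj v w
    · exact ⟨w, h1, rfl⟩
    by_cases h2 : G.Adj v (f w)
    · exact ⟨f w, h2, hcf w⟩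
    exfalso
    have hvw : v ≠ w := fun h => hj (by rw [h])
    have hvfw : v ≠ f w := fun h => hj (by rw [h, hcf])
    exact h3p1 v w (f w) hvw hvfw (hne w) h1 h2 (hnadj w)

lemma fallToMatch {V : Type} [Fintype V] (G : SimpleGraph V)
    (c : V → ℕ) (hc : IsFallColoring G c)
    (h2 : ∀ j ∈ Set.range c, ∃ a b : V, a ≠ b ∧ {v | c v = j} = {a, b}) :
    ∃ M : (Gᶜ).Subgraph, M.IsPerfectMatching := by
  refine ⟨{ verts := Set.univ
            Adj := fun u v => u ≠ v ∧ c u = c v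
            adj_sub := fun {u v} h => (compl_adj G u v).mpr ⟨h.1, fun ha => hc.1 u v ha h.2⟩
            edge_vert := fun _ => Set.mem_univ _
            symm := ⟨fun u v h => ⟨h.1.symm, h.2.symm⟩⟩ }, ?_⟩
  rw [Subgraph.isPerfectMatching_iff]
  intro v
  obtain ⟨a, b, hab, hset⟩ := h2 (c v) ⟨v, rfl⟩
  have hv : v ∈ ({a, b} : Set V) := by rw [← hset]; exact rfl
  have hmema : ∀ x, c x = c v ↔ x ∈ ({a, b} : Set V) := by
    intro x; rw [← hset]; rfl
  rcases hv with rfl | hv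
  · refine ⟨b, ⟨hab, ((hmema b).mpr (Or.inr rfl)).symm⟩, ?_⟩
    rintro y ⟨hyv, hy⟩
    rcases (hmema y).mp hy.symm with rfl | h
    · exact absurd rfl hyv
    · exact h
  · rw [Set.mem_singleton_iff] at hv; subst hv
    refine ⟨a, ⟨hab.symm, ((hmema a).mpr (Or.inl rfl)).symm⟩, ?_⟩
    rintro y ⟨hyv, hy⟩
    rcases (hmema y).mp hy.symm with h | rfl
    · exact h
    · exact absurd rfl hyv

theorem stmt12 {V : Type} [Fintype V] (G : SimpleGraph V) (hconn : G.Connected)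
    (h3p1 : ∀ u v w : V, u ≠ v → u ≠ w → v ≠ w →
      ¬ G.Adj u v → ¬ G.Adj u w → ¬ G.Adj v w → False)
    (hnodom : ¬ ∃ v : V, ∀ w, w ≠ v → G.Adj v w) :
    ((∃ c : V → ℕ, IsFallColoring G c) ↔
      ∃ M : (Gᶜ).Subgraph, M.IsPerfectMatching) ∧
    (∀ c : V → ℕ, IsFallColoring G c →
      (∀ j ∈ Set.range c, {v | c v = j}.ncard = 2) ∧
      numColors c = Fintype.card V / 2) := by
  constructor
  · constructor
    · rintro ⟨c, hc⟩
      refine fallToMatch G c hc (fun j hj => ?_)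
      obtain ⟨a, b, hab, -, hset⟩ := classPair G h3p1 hnodom c hc j hj
      exact ⟨a, b, hab, hset⟩
    · rintro ⟨M, hM⟩
      exact matchToFall G h3p1 M hM
  · intro c hc
    have h2 : ∀ j ∈ Set.range c, {v | c v = j}.ncard = 2 := by
      intro j hj
      obtain ⟨a, b, hab, -, hset⟩ := classPair G h3p1 hnodom c hc j hj
      rw [hset]
      exact Set.ncard_pair hab
    refine ⟨h2, ?_⟩
    have hcount := countLem c h2
    unfold numColors
    omega
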